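/- Let G be a graph of order n with m edges and let r be a restraint on G. Write π_r(G,x) = Σ_{i=0}^{n} (−1)^{n−i} a_i x^i for x ≥ M_{G,r}. Then a_{n−1} = m + Σ_{u ∈ V(G)} |r(u)|. -/

import Mathlib

/-- The number of proper `x`-colourings of `G` (colours `1,…,x`) permitted by the restraint `r`,
i.e. proper colourings `c` with `c v ∉ r v` for all `v`. -/
noncomputable def rcount {V : Type} [Fintype V] (G : SimpleGraph V) (r : V → Finset ℕ)
    (x : ℕ) : ℕ := by
  classical
  exact ((Fintype.piFinset fun _ : V => Finset.Icc 1 x).filter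
    (fun c => (∀ v w, G.Adj v w → c v ≠ c w) ∧ ∀ v, c v ∉ r v)).card

open Finset Filter

section Helpers

variable {V : Type} [Fintype V] [DecidableEq V]

lemma cardA (x : ℕ) (w : V) (g : (V → ℕ) → ℕ)
    (hg : ∀ c c' : V → ℕ, (∀ v, v ≠ w → c v = c' v) → g c = g c')
    (hgmem : ∀ c : V → ℕ, (∀ v, v ≠ w → c v ∈ Finset.Icc 1 x) → g c ∈ Finset.Icc 1 x) :
    (((Fintype.piFinset fun _ : V => Finset.Icc 1 x)).filter
      (fun c => c w = g c)).card = x ^ (Fintype.card V - 1) := by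
  classical
  have key : (((Fintype.piFinset fun _ : V => Finset.Icc 1 x)).filter
      (fun c => c w = g c)).card =
      (Fintype.piFinset fun v : V => if v = w then ({0} : Finset ℕ) else Finset.Icc 1 x).card := by
    apply Finset.card_bij (fun c _ => Function.update c w 0)
    · intro c hc
      simp only [Finset.mem_filter, Fintype.mem_piFinset] at hc ⊢
      intro v
      by_cases h : v = w
      · subst h; simp
      · simp [Function.update_of_ne h, h, hc.1 v]
    · intro c hc c' hc' h
      simp only [Finset.mem_filter, Fintype.mem_piFinset] at hc hc'
      funext v
      by_cases hv : v = w
      · subst hv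
        rw [hc.2, hc'.2]
        exact hg c c' fun u hu => by
          have := congrFun h u
          rwa [Function.update_of_ne hu, Function.update_of_ne hu] at this
      · have := congrFun h v
        rwa [Function.update_of_ne hv, Function.update_of_ne hv] at this
    · intro c' hc'
      simp only [Fintype.mem_piFinset] at hc'
      refine ⟨Function.update c' w (g c'), ?_, ?_⟩
      · simp only [Finset.mem_filter, Fintype.mem_piFinset]
        have hoff : ∀ v, v ≠ w → c' v ∈ Finset.Icc 1 x := by
          intro v hv; have := hc' v; simpa [hv] using this
        have hgc' : g c' ∈ Finset.Icc 1 x := hgmem c' hoff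
        refine ⟨?_, ?_⟩
        · intro v
          by_cases hv : v = w
          · subst hv; simpa using hgc'
          · rw [Function.update_of_ne hv]; exact hoff v hv
        · rw [Function.update_self]
          exact (hg _ _ fun u hu => (Function.update_of_ne hu _ _)).symm
      · funext v
        by_cases hv : v = w
        · subst hv
          have := hc' v; simp at this
          simp [this]
        · simp [Function.update_of_ne hv]
  rw [key, Fintype.card_piFinset]
  rw [← Finset.prod_erase_mul _ _ (Finset.mem_univ w)]
  simp only [if_pos rfl, Finset.card_singleton, mul_one]
  rw [Finset.prod_congr rfl (fun v hv => by
    rw [if_neg (Finset.ne_of_mem_erase hv), Nat.card_Icc])]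
  rw [Finset.prod_const, Finset.card_erase_of_mem (Finset.mem_univ w), Finset.card_univ]
  simp

lemma cardB (x : ℕ) (w w' : V) (hww : w ≠ w') (g₁ g₂ : (V → ℕ) → ℕ)
    (hg₁ : ∀ c c' : V → ℕ, (∀ v, v ≠ w → c v = c' v) → g₁ c = g₁ c')
    (hg₂ : ∀ c c' : V → ℕ, (∀ v, v ≠ w → v ≠ w' → c v = c' v) → g₂ c = g₂ c')
    (P : (V → ℕ) → Prop) [DecidablePred P]
    (hP : ∀ c, P c → c w = g₁ c ∧ c w' = g₂ c) :
    (((Fintype.piFinset fun _ : V => Finset.Icc 1 x)).filter P).card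
      ≤ x ^ (Fintype.card V - 2) := by
  classical
  have hle : (((Fintype.piFinset fun _ : V => Finset.Icc 1 x)).filter P).card ≤
      (Fintype.piFinset fun v : V =>
        if v = w ∨ v = w' then ({0} : Finset ℕ) else Finset.Icc 1 x).card := by
    apply Finset.card_le_card_of_injOn
      (fun c => Function.update (Function.update c w 0) w' 0)
    · intro c hc
      simp only [Finset.mem_coe, Finset.mem_filter, Fintype.mem_piFinset] at hc ⊢
      intro v
      by_cases h1 : v = w'
      · subst h1; simp
      · by_cases h2 : v = w
        · subst h2; simp [Function.update_of_ne h1, hww]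
        · simp [Function.update_of_ne h1, Function.update_of_ne h2, h1, h2, hc.1 v]
    · intro c hc c' hc' h
      simp only [coe_filter, Set.mem_setOf_eq, Fintype.mem_piFinset] at hc hc'
      have hoff : ∀ v, v ≠ w → v ≠ w' → c v = c' v := by
        intro v h1 h2
        have := congrFun h v
        simp only [Function.update_of_ne h2, Function.update_of_ne h1] at this
        exact this
      have hcw' : c w' = c' w' := by
        rw [(hP c hc.2).2, (hP c' hc'.2).2]
        exact hg₂ c c' hoff
      have hoff1 : ∀ v, v ≠ w → c v = c' v := by
        intro v h1
        by_cases h2 : v = w'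
        · subst h2; exact hcw'
        · exact hoff v h1 h2
      funext v
      by_cases h1 : v = w
      · subst h1
        rw [(hP c hc.2).1, (hP c' hc'.2).1]
        exact hg₁ c c' hoff1
      · exact hoff1 v h1
  refine hle.trans ?_
  rw [Fintype.card_piFinset]
  have : ∀ v : V, ((if v = w ∨ v = w' then ({0} : Finset ℕ) else Finset.Icc 1 x)).card
      = if v = w ∨ v = w' then 1 else x := by
    intro v; split <;> simp [Nat.card_Icc]
  rw [Finset.prod_congr rfl fun v _ => this v]
  rw [Finset.prod_ite]
  simp only [Finset.prod_const, one_pow, one_mul]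
  have hcard : (Finset.univ.filter fun v : V => ¬(v = w ∨ v = w')).card
      = Fintype.card V - 2 := by
    have : (Finset.univ.filter fun v : V => ¬(v = w ∨ v = w')) =
        (Finset.univ.erase w).erase w' := by
      ext v; simp [not_or, and_comm, Finset.mem_erase]
    rw [this,
      Finset.card_erase_of_mem (Finset.mem_erase.2 ⟨Ne.symm hww, Finset.mem_univ w'⟩),
      Finset.card_erase_of_mem (Finset.mem_univ w), Finset.card_univ]
    omega
  rw [hcard]

lemma bonferroni2 {ι α : Type} [DecidableEq ι] [DecidableEq α] (B : ι → Finset α)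
    (I : Finset ι) :
    ∑ i ∈ I, (B i).card ≤ (I.biUnion B).card +
      ∑ i ∈ I, ∑ j ∈ I.erase i, (B i ∩ B j).card := by
  classical
  induction I using Finset.induction_on with
  | empty => simp
  | @insert a I ha IH =>
    rw [Finset.sum_insert ha, Finset.biUnion_insert]
    have h1 : (B a ∪ I.biUnion B).card + (B a ∩ I.biUnion B).card
        = (B a).card + (I.biUnion B).card := Finset.card_union_add_card_inter _ _
    have h2 : (B a ∩ I.biUnion B).card ≤ ∑ j ∈ I, (B a ∩ B j).card := by
      rw [Finset.inter_biUnion]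
      exact Finset.card_biUnion_le
    have h3 : ∑ i ∈ insert a I, ∑ j ∈ (insert a I).erase i, (B i ∩ B j).card
        = ∑ j ∈ I, (B a ∩ B j).card + (∑ i ∈ I, (B i ∩ B a).card
          + ∑ i ∈ I, ∑ j ∈ I.erase i, (B i ∩ B j).card) := by
      rw [Finset.sum_insert ha, Finset.erase_insert ha]
      have hin : ∀ i ∈ I, ∑ j ∈ (insert a I).erase i, (B i ∩ B j).card
          = (B i ∩ B a).card + ∑ j ∈ I.erase i, (B i ∩ B j).card := by
        intro i hi
        rw [Finset.erase_insert_of_ne (show i ≠ a from fun h => ha (h ▸ hi)).symm,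
          Finset.sum_insert (fun h => ha (Finset.mem_of_mem_erase h))]
      rw [Finset.sum_congr rfl hin, Finset.sum_add_distrib]
    omega

lemma tendsto_poly_div (b : ℕ → ℝ) (d : ℕ) :
    Filter.Tendsto (fun x : ℕ => (∑ i ∈ Finset.range (d+1), b i * (x:ℝ)^i) / (x:ℝ)^d)
      Filter.atTop (nhds (b d)) := by
  have hrw : (fun x : ℕ => (∑ i ∈ Finset.range (d+1), b i * (x:ℝ)^i) / (x:ℝ)^d)
      = fun x : ℕ => ∑ i ∈ Finset.range (d+1), b i * (x:ℝ)^i / (x:ℝ)^d := by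
    funext x; rw [Finset.sum_div]
  rw [hrw]
  have hnat : Filter.Tendsto (fun x : ℕ => (x:ℝ)) Filter.atTop Filter.atTop :=
    tendsto_natCast_atTop_atTop
  have hterm : ∀ i ∈ Finset.range (d+1),
      Filter.Tendsto (fun x : ℕ => b i * (x:ℝ)^i / (x:ℝ)^d) Filter.atTop
        (nhds (if i = d then b i else 0)) := by
    intro i hi
    by_cases h : i = d
    · subst h
      simp only [if_pos rfl]
      apply Filter.Tendsto.congr' (f₁ := fun _ : ℕ => b i)
      · filter_upwards [Filter.eventually_ge_atTop 1] with x hx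
        have hx0 : (x:ℝ) ≠ 0 := by positivity
        field_simp
      · exact tendsto_const_nhds
    · have hmem := Finset.mem_range.1 hi
      have hilt : i < d := by omega
      simp only [if_neg h]
      apply Filter.Tendsto.congr' (f₁ := fun x : ℕ => b i / (x:ℝ)^(d-i))
      · filter_upwards [Filter.eventually_ge_atTop 1] with x hx
        have hx0 : (x:ℝ) ≠ 0 := by
          have : (1:ℝ) ≤ (x:ℝ) := by exact_mod_cast hx
          positivity
        rw [div_eq_div_iff (by positivity) (by positivity), mul_assoc, ← pow_add]
        have hdi : i + (d - i) = d := by omega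
        rw [hdi]
      · apply Filter.Tendsto.div_atTop tendsto_const_nhds
        exact (tendsto_pow_atTop (by omega : d - i ≠ 0)).comp hnat
  have := tendsto_finset_sum (Finset.range (d+1)) hterm
  simpa [Finset.sum_ite_eq' (Finset.range (d+1))] using this

lemma cardB' (x : ℕ) (w w' : V) (hww : w ≠ w') (g₁ g₂ : (V → ℕ) → ℕ)
    (hg₁ : ∀ c c' : V → ℕ, (∀ v, v ≠ w → c v = c' v) → g₁ c = g₁ c')
    (hg₂ : ∀ c c' : V → ℕ, (∀ v, v ≠ w → v ≠ w' → c v = c' v) → g₂ c = g₂ c')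
    (P : (V → ℕ) → Prop) [DecidablePred P]
    (hP : ∀ c, P c → c w = g₁ c ∧ c w' = g₂ c) :
    x ^ 2 * (((Fintype.piFinset fun _ : V => Finset.Icc 1 x)).filter P).card
      ≤ x ^ Fintype.card V := by
  have h2 : 2 ≤ Fintype.card V := Fintype.one_lt_card_iff.2 ⟨w, w', hww⟩
  calc x ^ 2 * (((Fintype.piFinset fun _ : V => Finset.Icc 1 x)).filter P).card
      ≤ x ^ 2 * x ^ (Fintype.card V - 2) :=
        Nat.mul_le_mul_left _ (cardB x w w' hww g₁ g₂ hg₁ hg₂ P hP)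
    _ = x ^ Fintype.card V := by rw [← pow_add]; congr 1; omega

end Helpers

section Setup

variable {V : Type} [Fintype V] [DecidableEq V]

def TTx (V : Type) [Fintype V] [DecidableEq V] (x : ℕ) : Finset (V → ℕ) :=
  Fintype.piFinset fun _ => Finset.Icc 1 x

def wFx : (V × V) ⊕ (V × ℕ) → V := Sum.elim Prod.snd Prod.fst

def gFx : (V × V) ⊕ (V × ℕ) → (V → ℕ) → ℕ := Sum.elim (fun p c => c p.1) (fun q _ => q.2)

def idx1 [LinearOrder V] (G : SimpleGraph V) [DecidableRel G.Adj] : Finset (V × V) :=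
  univ.filter fun p => G.Adj p.1 p.2 ∧ p.1 < p.2

def idx2 (r : V → Finset ℕ) : Finset (V × ℕ) :=
  univ.biUnion fun v => (r v).image fun col => (v, col)

def bigI [LinearOrder V] (G : SimpleGraph V) [DecidableRel G.Adj] (r : V → Finset ℕ) :
    Finset ((V × V) ⊕ (V × ℕ)) :=
  (idx1 G).map ⟨Sum.inl, Sum.inl_injective⟩ ∪ (idx2 r).map ⟨Sum.inr, Sum.inr_injective⟩

def BBx (x : ℕ) (i : (V × V) ⊕ (V × ℕ)) : Finset (V → ℕ) :=
  (TTx V x).filter fun c => c (wFx i) = gFx i c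

lemma mem_idx2 (r : V → Finset ℕ) (q : V × ℕ) : q ∈ idx2 r ↔ q.2 ∈ r q.1 := by
  obtain ⟨v, col⟩ := q
  simp only [idx2, Finset.mem_biUnion, Finset.mem_image, Finset.mem_univ, true_and]
  constructor
  · rintro ⟨u, col', h, heq⟩
    rw [Prod.mk.injEq] at heq
    obtain ⟨rfl, rfl⟩ := heq
    exact h
  · intro h; exact ⟨v, col, h, rfl⟩

lemma TTx_card (x : ℕ) : (TTx V x).card = x ^ Fintype.card V := by
  rw [TTx, Fintype.card_piFinset]
  simp [Nat.card_Icc]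

lemma idx1_card [LinearOrder V] (G : SimpleGraph V) [DecidableRel G.Adj] :
    (idx1 G).card = G.edgeFinset.card := by
  apply Finset.card_bij (s := idx1 G) (t := G.edgeFinset) (fun p _ => Sym2.mk p.1 p.2)
  · rintro ⟨a, b⟩ hp
    simp only [idx1, Finset.mem_filter] at hp
    simp only [SimpleGraph.mem_edgeFinset, SimpleGraph.mem_edgeSet]
    exact hp.2.1
  · rintro ⟨a, b⟩ hp ⟨c, d⟩ hp' h
    simp only [idx1, Finset.mem_filter] at hp hp'
    rw [Sym2.mk_eq_mk_iff] at h
    rcases h with h | h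
    · exact h
    · exfalso
      simp only [Prod.swap_prod_mk, Prod.mk.injEq] at h
      obtain ⟨rfl, rfl⟩ := h
      exact absurd hp'.2.2 (lt_asymm hp.2.2)
  · intro e he
    rw [SimpleGraph.mem_edgeFinset] at he
    induction e with
    | _ a b =>
      have hadj : G.Adj a b := he
      rcases lt_trichotomy a b with h | h | h
      · exact ⟨(a, b), by simp [idx1, hadj, h], rfl⟩
      · exact absurd h hadj.ne
      · exact ⟨(b, a), by simp [idx1, hadj.symm, h], Sym2.eq_swap⟩

lemma idx2_card (r : V → Finset ℕ) : (idx2 r).card = ∑ u : V, (r u).card := by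
  rw [idx2, Finset.card_biUnion]
  · exact Finset.sum_congr rfl fun v _ =>
      Finset.card_image_of_injective _ (fun a b h => by simpa using h)
  · intro v _ v' _ hvv'
    simp only [Finset.disjoint_left, Finset.mem_image]
    rintro q ⟨c, _, rfl⟩ ⟨c', _, heq⟩
    exact hvv' (by simpa using (Prod.mk.injEq .. ▸ heq).1.symm) |>.elim

lemma bigI_card [LinearOrder V] (G : SimpleGraph V) [DecidableRel G.Adj] (r : V → Finset ℕ) :
    (bigI G r).card = G.edgeFinset.card + ∑ u : V, (r u).card := by
  rw [bigI, Finset.card_union_of_disjoint, Finset.card_map, Finset.card_map, idx1_card,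
    idx2_card]
  simp only [Finset.disjoint_left, Finset.mem_map]
  rintro i ⟨p, _, rfl⟩ ⟨q, _, h⟩
  exact Sum.inl_ne_inr h.symm

end Setup


section Main

variable {V : Type} [Fintype V] [DecidableEq V]

set_option linter.unusedSectionVars false

lemma BBx_card (r : V → Finset ℕ) [LinearOrder V] (G : SimpleGraph V) [DecidableRel G.Adj]
    (hpos : ∀ v : V, ∀ c ∈ r v, 1 ≤ c)
    (x : ℕ) (hx : (Finset.univ.sup fun v : V => (r v).sup id) ≤ x)
    (i : (V × V) ⊕ (V × ℕ)) (hi : i ∈ bigI G r) :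
    (BBx x i).card = x ^ (Fintype.card V - 1) := by
  rcases Finset.mem_union.1 hi with h | h
  · obtain ⟨p, hp, rfl⟩ := Finset.mem_map.1 h
    simp only [idx1, Finset.mem_filter] at hp
    have hne : p.1 ≠ p.2 := ne_of_lt hp.2.2
    rw [BBx]
    exact cardA x p.2 (fun c => c p.1)
      (fun c c' hcc => hcc p.1 hne) (fun c hc => hc p.1 hne)
  · obtain ⟨q, hq, rfl⟩ := Finset.mem_map.1 h
    rw [mem_idx2] at hq
    have h1 : 1 ≤ q.2 := hpos q.1 q.2 hq
    have h2 : q.2 ≤ x := le_trans (le_trans (Finset.le_sup (f := id) hq)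
      (Finset.le_sup (f := fun v => (r v).sup id) (Finset.mem_univ q.1))) hx
    rw [BBx]
    exact cardA x q.1 (fun _ => q.2)
      (fun c c' _ => rfl) (fun c _ => Finset.mem_Icc.2 ⟨h1, h2⟩)

lemma rcount_split [LinearOrder V] (G : SimpleGraph V) [DecidableRel G.Adj]
    (r : V → Finset ℕ) (x : ℕ) :
    rcount G r x + (((bigI G r)).biUnion (BBx x)).card = x ^ Fintype.card V := by
  classical
  have hsub : ((bigI G r)).biUnion (BBx x) ⊆ TTx V x := by
    intro c hc
    obtain ⟨i, _, hci⟩ := Finset.mem_biUnion.1 hc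
    exact Finset.filter_subset _ _ hci
  have hrc : rcount G r x = ((TTx V x).filter
      (fun c => (∀ v w, G.Adj v w → c v ≠ c w) ∧ ∀ v, c v ∉ r v)).card := by
    unfold rcount TTx
    congr!
  have hset : (TTx V x).filter
      (fun c => (∀ v w, G.Adj v w → c v ≠ c w) ∧ ∀ v, c v ∉ r v)
      = (TTx V x) \ ((bigI G r)).biUnion (BBx x) := by
    ext c
    simp only [Finset.mem_filter, Finset.mem_sdiff, Finset.mem_biUnion, not_exists, BBx]
    constructor
    · rintro ⟨hcT, hproper, hres⟩
      refine ⟨hcT, fun i hconj => ?_⟩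
      obtain ⟨hiI, _, hmem⟩ := hconj
      rcases Finset.mem_union.1 hiI with h | h
      · obtain ⟨p, hp, rfl⟩ := Finset.mem_map.1 h
        simp only [idx1, Finset.mem_filter] at hp
        exact hproper p.1 p.2 hp.2.1 hmem.symm
      · obtain ⟨q, hq, rfl⟩ := Finset.mem_map.1 h
        rw [mem_idx2] at hq
        exact hres q.1 (hmem ▸ hq)
    · rintro ⟨hcT, hnot⟩
      refine ⟨hcT, fun v w hadj heq => ?_, fun v hv => ?_⟩
      · have hvw : v ≠ w := hadj.ne
        rcases hvw.lt_or_gt with hlt | hlt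
        · exact hnot (Sum.inl (v, w)) ⟨Finset.mem_union_left _ (Finset.mem_map_of_mem _
            (by simp [idx1, hadj, hlt])), hcT, heq.symm⟩
        · exact hnot (Sum.inl (w, v)) ⟨Finset.mem_union_left _ (Finset.mem_map_of_mem _
            (by simp [idx1, hadj.symm, hlt])), hcT, heq⟩
      · exact hnot (Sum.inr (v, c v)) ⟨Finset.mem_union_right _
          (Finset.mem_map_of_mem _ ((mem_idx2 r _).2 hv)), hcT, rfl⟩
  rw [hset] at hrc
  rw [hrc, Finset.card_sdiff_of_subset hsub, TTx_card]
  have := Finset.card_le_card hsub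
  rw [TTx_card] at this
  omega

end Main


section Pair

variable {V : Type} [Fintype V] [DecidableEq V]

set_option linter.unusedSectionVars false

lemma pair_bound [LinearOrder V] (G : SimpleGraph V) [DecidableRel G.Adj]
    (r : V → Finset ℕ) (x : ℕ) (i j : (V × V) ⊕ (V × ℕ))
    (hi : i ∈ bigI G r) (hj : j ∈ bigI G r) (hij : i ≠ j) :
    x ^ 2 * (BBx x i ∩ BBx x j).card ≤ x ^ Fintype.card V := by
  have hinter : BBx (V := V) x i ∩ BBx x j = (TTx V x).filter
      (fun c => c (wFx i) = gFx i c ∧ c (wFx j) = gFx j c) := by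
    rw [BBx, BBx, ← Finset.filter_and]
  rw [hinter]
  rcases Finset.mem_union.1 hi with h | h
  · obtain ⟨p, hp, rfl⟩ := Finset.mem_map.1 h
    obtain ⟨u, w⟩ := p
    simp only [idx1, Finset.mem_filter] at hp
    have huw : u ≠ w := ne_of_lt hp.2.2
    rcases Finset.mem_union.1 hj with h' | h'
    · obtain ⟨p', hp', rfl⟩ := Finset.mem_map.1 h'
      obtain ⟨u', w'⟩ := p'
      simp only [idx1, Finset.mem_filter] at hp'
      have huw' : u' ≠ w' := ne_of_lt hp'.2.2
      have hpne : (u, w) ≠ (u', w') := fun hh => hij (congrArg Sum.inl hh)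
      by_cases hww : w = w'
      · subst hww
        have huu : u ≠ u' := fun hh => hpne (by rw [hh])
        exact cardB' x u' w (fun hh => huw' hh) (fun c => c u) (fun c => c u)
          (fun c c' hcc => hcc u huu)
          (fun c c' hcc => hcc u huu huw)
          _ (fun c hc => ⟨hc.2.symm.trans hc.1, hc.1⟩)
      · by_cases hu'w : u' = w
        · have huw'2 : u ≠ w' := by
            intro hh
            subst hh
            subst hu'w
            exact absurd (hp.2.2.trans hp'.2.2) (lt_irrefl u)
          exact cardB' x w' w (Ne.symm hww) (fun c => c u') (fun c => c u)
            (fun c c' hcc => hcc u' huw')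
            (fun c c' hcc => hcc u (fun hh => huw'2 hh) (fun hh => huw hh))
            _ (fun c hc => ⟨hc.2, hc.1⟩)
        · exact cardB' x w w' hww (fun c => c u) (fun c => c u')
            (fun c c' hcc => hcc u huw)
            (fun c c' hcc => hcc u' hu'w huw')
            _ (fun c hc => hc)
    · obtain ⟨q, hq, rfl⟩ := Finset.mem_map.1 h'
      obtain ⟨v, col⟩ := q
      by_cases hvw : v = w
      · subst hvw
        exact cardB' x u v huw (fun _ => col) (fun _ => col)
          (fun c c' _ => rfl) (fun c c' _ => rfl)
          _ (fun c hc => ⟨hc.1.symm.trans hc.2, hc.2⟩)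
      · exact cardB' x w v (Ne.symm hvw) (fun c => c u) (fun _ => col)
          (fun c c' hcc => hcc u huw) (fun c c' _ => rfl)
          _ (fun c hc => hc)
  · obtain ⟨q, hq, rfl⟩ := Finset.mem_map.1 h
    obtain ⟨v, col⟩ := q
    rcases Finset.mem_union.1 hj with h' | h'
    · obtain ⟨p, hp, rfl⟩ := Finset.mem_map.1 h'
      obtain ⟨u, w⟩ := p
      simp only [idx1, Finset.mem_filter] at hp
      have huw : u ≠ w := ne_of_lt hp.2.2
      by_cases hvw : v = w
      · subst hvw
        exact cardB' x u v huw (fun _ => col) (fun _ => col)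
          (fun c c' _ => rfl) (fun c c' _ => rfl)
          _ (fun c hc => ⟨hc.2.symm.trans hc.1, hc.1⟩)
      · exact cardB' x w v (Ne.symm hvw) (fun c => c u) (fun _ => col)
          (fun c c' hcc => hcc u huw) (fun c c' _ => rfl)
          _ (fun c hc => ⟨hc.2, hc.1⟩)
    · obtain ⟨q', hq', rfl⟩ := Finset.mem_map.1 h'
      obtain ⟨v', col'⟩ := q'
      have hqne : (v, col) ≠ (v', col') := fun hh => hij (congrArg Sum.inr hh)
      by_cases hvv : v = v'
      · subst hvv
        have hcol : col ≠ col' := fun hh => hqne (by rw [hh])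
        have hempty : ((TTx V x).filter
            (fun c => c (wFx (Sum.inr (v, col))) = gFx (Sum.inr (v, col)) c ∧
              c (wFx (Sum.inr (v, col'))) = gFx (Sum.inr (v, col')) c)) = ∅ :=
          Finset.filter_false_of_mem
            (fun c _ hc => hcol (hc.1.symm.trans hc.2))
        simp only [Function.Embedding.coeFn_mk]
        rw [hempty]
        simp
      · exact cardB' x v v' hvv (fun _ => col) (fun _ => col')
          (fun c c' _ => rfl) (fun c c' _ => rfl)
          _ (fun c hc => hc)

end Pair


theorem stmt4 {V : Type} [Fintype V] [DecidableEq V] (G : SimpleGraph V) [DecidableRel G.Adj]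
    (r : V → Finset ℕ) (hpos : ∀ v : V, ∀ c ∈ r v, 1 ≤ c)
    (hn : 1 ≤ Fintype.card V) (a : ℕ → ℤ)
    (ha : ∀ x : ℕ, (Finset.univ.sup fun v : V => (r v).sup id) ≤ x →
      (rcount G r x : ℤ) =
        ∑ i ∈ Finset.range (Fintype.card V + 1),
          (-1 : ℤ) ^ (Fintype.card V - i) * a i * (x : ℤ) ^ i) :
    a (Fintype.card V - 1) = (G.edgeFinset.card : ℤ) + ∑ u : V, ((r u).card : ℤ) := by
  classical
  letI : LinearOrder V := LinearOrder.lift' (Fintype.equivFin V) (Fintype.equivFin V).injective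
  set n := Fintype.card V with hndef
  set M := (Finset.univ.sup fun v : V => (r v).sup id) with hMdef
  set Kn : ℕ := G.edgeFinset.card + ∑ u : V, (r u).card with hKdef
  -- sum of the cards of the bad sets
  have hBsum : ∀ x : ℕ, M ≤ x →
      ∑ i ∈ bigI G r, (BBx x i).card = Kn * x ^ (n - 1) := by
    intro x hx
    rw [Finset.sum_congr rfl (fun i hi => BBx_card r G hpos x hx i hi),
      Finset.sum_const, smul_eq_mul, bigI_card]
  have hUle : ∀ x : ℕ, M ≤ x →
      ((bigI G r).biUnion (BBx x)).card ≤ Kn * x ^ (n - 1) := by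
    intro x hx
    exact le_trans Finset.card_biUnion_le (le_of_eq (hBsum x hx))
  have hUge : ∀ x : ℕ, M ≤ x →
      Kn * x ^ (n - 1) ≤ ((bigI G r).biUnion (BBx x)).card +
        ∑ i ∈ bigI G r, ∑ j ∈ (bigI G r).erase i, (BBx x i ∩ BBx x j).card := by
    intro x hx
    rw [← hBsum x hx]
    exact bonferroni2 (BBx x) (bigI G r)
  have hScard : ∀ x : ℕ,
      x ^ 2 * (∑ i ∈ bigI G r, ∑ j ∈ (bigI G r).erase i, (BBx x i ∩ BBx x j).card)
        ≤ Kn ^ 2 * x ^ n := by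
    intro x
    calc x ^ 2 * (∑ i ∈ bigI G r, ∑ j ∈ (bigI G r).erase i, (BBx x i ∩ BBx x j).card)
        = ∑ i ∈ bigI G r, ∑ j ∈ (bigI G r).erase i, x ^ 2 * (BBx x i ∩ BBx x j).card := by
          simp only [Finset.mul_sum]
      _ ≤ ∑ i ∈ bigI G r, ∑ j ∈ (bigI G r).erase i, x ^ n := by
          refine Finset.sum_le_sum fun i hi => Finset.sum_le_sum fun j hj => ?_
          exact pair_bound G r x i j hi (Finset.mem_of_mem_erase hj)
            (Ne.symm (Finset.ne_of_mem_erase hj))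
      _ ≤ Kn ^ 2 * x ^ n := by
          simp only [Finset.sum_const, smul_eq_mul]
          calc ∑ i ∈ bigI G r, ((bigI G r).erase i).card * x ^ n
              ≤ ∑ _i ∈ bigI G r, Kn * x ^ n := by
                refine Finset.sum_le_sum fun i _ => Nat.mul_le_mul_right _ ?_
                exact le_trans (Finset.card_le_card (Finset.erase_subset _ _))
                  (le_of_eq (bigI_card G r))
            _ = Kn ^ 2 * x ^ n := by
                rw [Finset.sum_const, smul_eq_mul, bigI_card]
                ring
  -- the coefficients of the shifted polynomial
  set bz : ℕ → ℤ := fun i => (-1 : ℤ) ^ (n - i) * a i +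
    (if i = n then (-1 : ℤ) else 0) + (if i = n - 1 then (Kn : ℤ) else 0) with hbzdef
  have hsum : ∀ x : ℕ, M ≤ x →
      ∑ i ∈ Finset.range (n + 1), bz i * (x : ℤ) ^ i =
        (rcount G r x : ℤ) - (x : ℤ) ^ n + (Kn : ℤ) * (x : ℤ) ^ (n - 1) := by
    intro x hx
    rw [ha x hx]
    have hpt : ∀ i, bz i * (x : ℤ) ^ i =
        (-1 : ℤ) ^ (n - i) * a i * (x : ℤ) ^ i +
          (if i = n then -(x : ℤ) ^ i else 0) +
          (if i = n - 1 then (Kn : ℤ) * (x : ℤ) ^ i else 0) := by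
      intro i
      simp only [hbzdef]
      split_ifs <;> ring
    rw [Finset.sum_congr rfl fun i _ => hpt i, Finset.sum_add_distrib,
      Finset.sum_add_distrib, Finset.sum_ite_eq' (Finset.range (n + 1)),
      Finset.sum_ite_eq' (Finset.range (n + 1))]
    have h1 : n ∈ Finset.range (n + 1) := Finset.mem_range.2 (by omega)
    have h2 : n - 1 ∈ Finset.range (n + 1) := Finset.mem_range.2 (by omega)
    rw [if_pos h1, if_pos h2]
    ring
  -- nonnegativity and the quadratic bound
  have hb0 : ∀ x : ℕ, M ≤ x → 0 ≤ ∑ i ∈ Finset.range (n + 1), bz i * (x : ℤ) ^ i := by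
    intro x hx
    rw [hsum x hx]
    have e1 : (rcount G r x : ℤ) + ((bigI G r).biUnion (BBx x)).card = (x : ℤ) ^ n := by
      exact_mod_cast congrArg (Nat.cast : ℕ → ℤ) (rcount_split G r x)
    have e2 : (((bigI G r).biUnion (BBx x)).card : ℤ) ≤ (Kn : ℤ) * (x : ℤ) ^ (n - 1) := by
      exact_mod_cast hUle x hx
    linarith
  have hb2 : ∀ x : ℕ, M ≤ x →
      (x : ℤ) ^ 2 * ∑ i ∈ Finset.range (n + 1), bz i * (x : ℤ) ^ i ≤
        (Kn : ℤ) ^ 2 * (x : ℤ) ^ n := by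
    intro x hx
    rw [hsum x hx]
    have e1 : (rcount G r x : ℤ) + ((bigI G r).biUnion (BBx x)).card = (x : ℤ) ^ n := by
      exact_mod_cast congrArg (Nat.cast : ℕ → ℤ) (rcount_split G r x)
    have e3 : (Kn : ℤ) * (x : ℤ) ^ (n - 1) ≤ ((bigI G r).biUnion (BBx x)).card +
        (∑ i ∈ bigI G r, ∑ j ∈ (bigI G r).erase i, (BBx x i ∩ BBx x j).card : ℕ) := by
      exact_mod_cast hUge x hx
    have e4 : (x : ℤ) ^ 2 *
        ((∑ i ∈ bigI G r, ∑ j ∈ (bigI G r).erase i, (BBx x i ∩ BBx x j).card : ℕ) : ℤ) ≤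
        (Kn : ℤ) ^ 2 * (x : ℤ) ^ n := by
      exact_mod_cast hScard x
    have hx2 : (0 : ℤ) ≤ (x : ℤ) ^ 2 := by positivity
    nlinarith [e1, e3, e4, hx2]
  -- limit arguments to extract the two leading coefficients
  have hcast : ∀ x : ℕ, (∑ i ∈ Finset.range (n + 1), ((bz i : ℝ)) * (x : ℝ) ^ i)
      = ((∑ i ∈ Finset.range (n + 1), bz i * (x : ℤ) ^ i : ℤ) : ℝ) := by
    intro x; push_cast; ring
  have hbn : bz n = 0 := by
    have h1 := tendsto_poly_div (fun i => (bz i : ℝ)) n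
    have h2 : Filter.Tendsto (fun x : ℕ =>
        (∑ i ∈ Finset.range (n + 1), ((bz i : ℝ)) * (x : ℝ) ^ i) / (x : ℝ) ^ n)
        Filter.atTop (nhds 0) := by
      apply squeeze_zero' (g := fun x : ℕ => ((Kn : ℝ)) ^ 2 / (x : ℝ) ^ 2)
      · filter_upwards [Filter.eventually_ge_atTop (max M 1)] with x hx
        have hM : M ≤ x := le_trans (le_max_left _ _) hx
        have hx1 : (1 : ℕ) ≤ x := le_trans (le_max_right _ _) hx
        have hxR : (0 : ℝ) < (x : ℝ) := by exact_mod_cast Nat.pos_of_ne_zero (by omega)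
        apply div_nonneg
        · rw [hcast x]; exact_mod_cast hb0 x hM
        · positivity
      · filter_upwards [Filter.eventually_ge_atTop (max M 1)] with x hx
        have hM : M ≤ x := le_trans (le_max_left _ _) hx
        have hx1 : (1 : ℕ) ≤ x := le_trans (le_max_right _ _) hx
        have hxR : (0 : ℝ) < (x : ℝ) := by exact_mod_cast Nat.pos_of_ne_zero (by omega)
        rw [div_le_div_iff₀ (by positivity) (by positivity), hcast x, mul_comm]
        exact_mod_cast hb2 x hM
      · exact Filter.Tendsto.div_atTop tendsto_const_nhds
          ((tendsto_pow_atTop two_ne_zero).comp tendsto_natCast_atTop_atTop)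
    have := tendsto_nhds_unique h1 h2
    exact_mod_cast this
  have hbn1 : bz (n - 1) = 0 := by
    have hr : n - 1 + 1 = n := by omega
    have h1 := tendsto_poly_div (fun i => (bz i : ℝ)) (n - 1)
    have hsum' : ∀ x : ℕ, (∑ i ∈ Finset.range (n - 1 + 1), ((bz i : ℝ)) * (x : ℝ) ^ i)
        = ∑ i ∈ Finset.range (n + 1), ((bz i : ℝ)) * (x : ℝ) ^ i := by
      intro x
      rw [hr]
      conv_rhs => rw [Finset.sum_range_succ]
      simp [hbn]
    have h2 : Filter.Tendsto (fun x : ℕ =>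
        (∑ i ∈ Finset.range (n - 1 + 1), ((bz i : ℝ)) * (x : ℝ) ^ i) / (x : ℝ) ^ (n - 1))
        Filter.atTop (nhds 0) := by
      apply squeeze_zero' (g := fun x : ℕ => ((Kn : ℝ)) ^ 2 / (x : ℝ))
      · filter_upwards [Filter.eventually_ge_atTop (max M 1)] with x hx
        have hM : M ≤ x := le_trans (le_max_left _ _) hx
        have hx1 : (1 : ℕ) ≤ x := le_trans (le_max_right _ _) hx
        have hxR : (0 : ℝ) < (x : ℝ) := by exact_mod_cast Nat.pos_of_ne_zero (by omega)
        apply div_nonneg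
        · rw [hsum' x, hcast x]; exact_mod_cast hb0 x hM
        · positivity
      · filter_upwards [Filter.eventually_ge_atTop (max M 1)] with x hx
        have hM : M ≤ x := le_trans (le_max_left _ _) hx
        have hx1 : (1 : ℕ) ≤ x := le_trans (le_max_right _ _) hx
        have hxR : (0 : ℝ) < (x : ℝ) := by exact_mod_cast Nat.pos_of_ne_zero (by omega)
        rw [div_le_div_iff₀ (by positivity) (by positivity), hsum' x, hcast x]
        have hR : (x : ℝ) ^ 2 * ((∑ i ∈ Finset.range (n + 1), bz i * (x : ℤ) ^ i : ℤ) : ℝ)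
            ≤ ((Kn : ℝ)) ^ 2 * (x : ℝ) ^ n := by exact_mod_cast hb2 x hM
        have hxn : (x : ℝ) ^ n = (x : ℝ) ^ (n - 1) * (x : ℝ) := by rw [← pow_succ, hr]
        rw [hxn] at hR
        have h6 : (((∑ i ∈ Finset.range (n + 1), bz i * (x : ℤ) ^ i : ℤ) : ℝ) * (x : ℝ))
            * (x : ℝ) ≤ (((Kn : ℝ)) ^ 2 * (x : ℝ) ^ (n - 1)) * (x : ℝ) := by nlinarith [hR]
        exact le_of_mul_le_mul_right h6 hxR
      · exact Filter.Tendsto.div_atTop tendsto_const_nhds tendsto_natCast_atTop_atTop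
    have := tendsto_nhds_unique h1 h2
    exact_mod_cast this
  have hne : n - 1 ≠ n := by omega
  have hpow : n - (n - 1) = 1 := by omega
  have hfin : bz (n - 1) = -a (n - 1) + (Kn : ℤ) := by
    simp only [hbzdef, if_pos rfl, if_neg hne, hpow, if_true, eq_self_iff_true]
    push_cast
    ring
  rw [hbn1] at hfin
  have haK : a (n - 1) = (Kn : ℤ) := by linarith
  rw [haK, hKdef]
  push_cast
  ring
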